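/- arXiv:0912.4646 — 4 statements merged into one kernel-verified Lean document; each statement's English description precedes it below -/
import Mathlib

section
/- For every real x ≥ 2, the series f(x) = ∑_{k=1}^{∞} μ(k) ν(x/k) (which is a finite sum, since ν(x/k) = 0 for k > x) satisfies f(x) = −1. -/
noncomputable def nu (t : ℝ) : ℝ := Int.fract (t/2) + 1/2 - Int.fract (t/2 + 1/2)

noncomputable def f (x : ℝ) : ℝ :=
  ∑ k ∈ Finset.Icc 1 ⌊x⌋₊, (ArithmeticFunction.moebius k : ℝ) * nu (x / k)

lemma nu_eq (t : ℝ) : nu t = (⌊t⌋ : ℝ) - 2 * (⌊t/2⌋ : ℝ) := by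
  unfold nu
  have h1 : (⌊t/2⌋ : ℝ) + Int.fract (t/2) = t/2 := Int.floor_add_fract _
  have hr0 : 0 ≤ Int.fract (t/2) := Int.fract_nonneg _
  have hr1 : Int.fract (t/2) < 1 := Int.fract_lt_one _
  have ht : t = 2 * (⌊t/2⌋ : ℝ) + 2 * Int.fract (t/2) := by linarith
  have hsplit : t/2 + 1/2 = (⌊t/2⌋ : ℝ) + (Int.fract (t/2) + 1/2) := by linarith
  rw [hsplit, Int.fract_intCast_add]
  rcases lt_or_ge (Int.fract (t/2)) (1/2) with h | h
  · have hf : Int.fract (Int.fract (t/2) + 1/2) = Int.fract (t/2) + 1/2 :=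
      Int.fract_eq_self.mpr ⟨by linarith, by linarith⟩
    have hfl : ⌊t⌋ = 2 * ⌊t/2⌋ := by
      rw [Int.floor_eq_iff]; push_cast; constructor <;> linarith
    rw [hf, hfl]; push_cast; ring
  · have hf : Int.fract (Int.fract (t/2) + 1/2) = Int.fract (t/2) - 1/2 := by
      have : Int.fract (t/2) + 1/2 = (1 : ℤ) + (Int.fract (t/2) - 1/2) := by push_cast; ring
      rw [this, Int.fract_intCast_add, Int.fract_eq_self.mpr ⟨by linarith, by linarith⟩]
    have hfl : ⌊t⌋ = 2 * ⌊t/2⌋ + 1 := by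
      rw [Int.floor_eq_iff]; push_cast; constructor <;> linarith
    rw [hf, hfl]; push_cast; ring

open ArithmeticFunction in
lemma key (N : ℕ) (hN : 1 ≤ N) :
    ∑ k ∈ Finset.Icc 1 N, (moebius k : ℤ) * (N / k : ℕ) = 1 := by
  have : ∀ k ∈ Finset.Icc 1 N, (moebius k : ℤ) * (N / k : ℕ)
      = ∑ m ∈ Finset.Ioc 0 N, if k ∣ m then (moebius k : ℤ) else 0 := by
    intro k _
    rw [← Finset.sum_filter, Finset.sum_const, nsmul_eq_mul,
      Nat.Ioc_filter_dvd_card_eq_div, mul_comm]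
  rw [Finset.sum_congr rfl this, Finset.sum_comm]
  have : ∀ m ∈ Finset.Ioc 0 N,
      (∑ k ∈ Finset.Icc 1 N, if k ∣ m then (moebius k : ℤ) else 0)
      = if m = 1 then 1 else 0 := by
    intro m hm
    rw [Finset.mem_Ioc] at hm
    rw [← Finset.sum_filter]
    have hdiv : Finset.filter (· ∣ m) (Finset.Icc 1 N) = m.divisors := by
      ext k
      simp only [Finset.mem_filter, Finset.mem_Icc, Nat.mem_divisors]
      constructor
      · rintro ⟨⟨h1, _⟩, h2⟩; exact ⟨h2, by omega⟩
      · rintro ⟨h1, _⟩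
        exact ⟨⟨Nat.one_le_iff_ne_zero.mpr (fun h => by subst h; simp at h1; omega),
          le_trans (Nat.le_of_dvd (by omega) h1) hm.2⟩, h1⟩
    rw [hdiv, ← coe_mul_zeta_apply, moebius_mul_coe_zeta, one_apply]
  rw [Finset.sum_congr rfl this, Finset.sum_ite_eq' (Finset.Ioc 0 N) 1 (fun _ => (1:ℤ))]
  simp [hN]

lemma key_real (N : ℕ) (hN : 1 ≤ N) :
    ∑ k ∈ Finset.Icc 1 N, (ArithmeticFunction.moebius k : ℝ) * (N / k : ℕ) = 1 := by
  have := key N hN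
  have h2 : ((∑ k ∈ Finset.Icc 1 N, (ArithmeticFunction.moebius k : ℤ) * (N / k : ℕ) : ℤ) : ℝ) = 1 := by
    rw [this]; norm_num
  push_cast at h2
  exact h2

theorem stmt7 : ∀ x : ℝ, 2 ≤ x → f x = -1 := by
  intro x hx
  have hx0 : (0:ℝ) ≤ x := by linarith
  have hx2 : (1:ℝ) ≤ x / 2 := by linarith
  set N := ⌊x⌋₊ with hNdef
  set M := ⌊x/2⌋₊ with hMdef
  have hN1 : 1 ≤ N := (Nat.one_le_floor_iff _).mpr (by linarith)
  have hM1 : 1 ≤ M := (Nat.one_le_floor_iff _).mpr hx2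
  have hMN : M ≤ N := Nat.floor_le_floor (by linarith)
  have hterm : ∀ k ∈ Finset.Icc 1 N,
      (ArithmeticFunction.moebius k : ℝ) * nu (x / k)
      = (ArithmeticFunction.moebius k : ℝ) * (N / k : ℕ)
        - 2 * ((ArithmeticFunction.moebius k : ℝ) * (M / k : ℕ)) := by
    intro k hk
    rw [Finset.mem_Icc] at hk
    have hk0 : (0:ℝ) < k := by exact_mod_cast hk.1
    have hxk : 0 ≤ x / k := div_nonneg hx0 hk0.le
    have hxk2 : 0 ≤ x / k / 2 := by positivity
    have e1 : (⌊x/k⌋ : ℝ) = ((N / k : ℕ) : ℝ) := by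
      rw [← Int.natCast_floor_eq_floor hxk, hNdef, ← Nat.floor_div_natCast x k]
      norm_num
    have e2 : (⌊x/k/2⌋ : ℝ) = ((M / k : ℕ) : ℝ) := by
      have : x / k / 2 = (x/2) / k := by ring
      rw [this, ← Int.natCast_floor_eq_floor (by positivity), hMdef, ← Nat.floor_div_natCast (x/2) k]
      norm_num
    rw [nu_eq, e1, e2]; ring
  rw [f, Finset.sum_congr rfl hterm, Finset.sum_sub_distrib, ← Finset.mul_sum,
    key_real N hN1]
  have hsub : ∑ k ∈ Finset.Icc 1 N, (ArithmeticFunction.moebius k : ℝ) * (M / k : ℕ)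
      = ∑ k ∈ Finset.Icc 1 M, (ArithmeticFunction.moebius k : ℝ) * (M / k : ℕ) := by
    symm
    apply Finset.sum_subset (Finset.Icc_subset_Icc_right hMN)
    intro k hk hk'
    rw [Finset.mem_Icc] at hk hk'
    have : M < k := by omega
    rw [Nat.div_eq_of_lt this]
    simp
  rw [hsub, key_real M hM1]
  norm_num
end

section
/- For every natural number n ≥ 1 and every real x with 2 ≤ x ≤ n, the partial sum f_n(x) = ∑_{k=1}^{n} μ(k) ν(x/k) equals −1. -/
lemma sum_moebius_div (N n : ℕ) (h1 : 1 ≤ N) (hN : N ≤ n) :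
    ∑ k ∈ Finset.Icc 1 n, (ArithmeticFunction.moebius k : ℤ) * (N / k : ℕ) = 1 := by
  have step1 : ∀ k : ℕ, (N / k : ℕ) = ((Finset.Ioc 0 N).filter (k ∣ ·)).card :=
    fun k => (Nat.Ioc_filter_dvd_card_eq_div N k).symm
  calc ∑ k ∈ Finset.Icc 1 n, (ArithmeticFunction.moebius k : ℤ) * (N / k : ℕ)
      = ∑ k ∈ Finset.Icc 1 n, ∑ j ∈ Finset.Ioc 0 N,
          (if k ∣ j then (ArithmeticFunction.moebius k : ℤ) else 0) := by
        refine Finset.sum_congr rfl fun k _ => ?_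
        rw [← Finset.sum_filter, step1 k, Finset.sum_const, nsmul_eq_mul, mul_comm]
    _ = ∑ j ∈ Finset.Ioc 0 N, ∑ k ∈ Finset.Icc 1 n,
          (if k ∣ j then (ArithmeticFunction.moebius k : ℤ) else 0) := Finset.sum_comm
    _ = ∑ j ∈ Finset.Ioc 0 N, (if j = 1 then 1 else 0) := by
        refine Finset.sum_congr rfl fun j hj => ?_
        rw [Finset.mem_Ioc] at hj
        rw [← Finset.sum_filter]
        have hset : (Finset.Icc 1 n).filter (· ∣ j) = j.divisors := by
          ext d
          simp only [Finset.mem_filter, Finset.mem_Icc, Nat.mem_divisors]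
          constructor
          · rintro ⟨⟨_, _⟩, hd⟩; exact ⟨hd, by omega⟩
          · rintro ⟨hd, hj0⟩
            exact ⟨⟨Nat.one_le_iff_ne_zero.mpr (fun h => hj0 (by simpa [h] using hd)),
              le_trans (Nat.le_of_dvd (by omega) hd) (by omega)⟩, hd⟩
        rw [hset]
        have := ArithmeticFunction.coe_mul_zeta_apply
          (f := (ArithmeticFunction.moebius : ArithmeticFunction ℤ)) (x := j)
        rw [ArithmeticFunction.moebius_mul_coe_zeta, ArithmeticFunction.one_apply] at this
        exact this.symm
    _ = 1 := by
        rw [Finset.sum_ite_eq' (Finset.Ioc 0 N) 1 (fun _ => (1:ℤ))]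
        simp [h1]

lemma sum_moebius_floor (n : ℕ) (y : ℝ) (h1 : 1 ≤ y) (hn : ⌊y⌋₊ ≤ n) :
    ∑ k ∈ Finset.Icc 1 n, (ArithmeticFunction.moebius k : ℝ) * (⌊y / k⌋₊ : ℝ) = 1 := by
  have key := sum_moebius_div ⌊y⌋₊ n (Nat.le_floor (by exact_mod_cast h1)) hn
  have h2 : ((∑ k ∈ Finset.Icc 1 n,
      (ArithmeticFunction.moebius k : ℤ) * (⌊y⌋₊ / k : ℕ) : ℤ) : ℝ) = 1 := by
    rw [key]; norm_num
  rw [← h2, Int.cast_sum]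
  refine Finset.sum_congr rfl fun k _ => ?_
  rw [Nat.floor_div_natCast y k, Int.cast_mul, Int.cast_natCast]

theorem stmt9 : ∀ n : ℕ, 1 ≤ n → ∀ x : ℝ, 2 ≤ x → x ≤ n →
    ∑ k ∈ Finset.Icc 1 n, (ArithmeticFunction.moebius k : ℝ) * nu (x / k) = -1 := by
  intro n hn x hx hxn
  have hx0 : (0:ℝ) ≤ x := by linarith
  have hfloor1 : ⌊x⌋₊ ≤ n := by
    calc ⌊x⌋₊ ≤ ⌊(n:ℝ)⌋₊ := Nat.floor_le_floor hxn
    _ = n := Nat.floor_natCast n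
  have hfloor2 : ⌊x/2⌋₊ ≤ n := le_trans (Nat.floor_le_floor (by linarith)) hfloor1
  have key : ∀ k ∈ Finset.Icc 1 n, (ArithmeticFunction.moebius k : ℝ) * nu (x / k) =
      (ArithmeticFunction.moebius k : ℝ) * (⌊x / k⌋₊ : ℝ)
      - 2 * ((ArithmeticFunction.moebius k : ℝ) * (⌊(x/2) / k⌋₊ : ℝ)) := by
    intro k hk
    rw [Finset.mem_Icc] at hk
    have hk0 : (0:ℝ) < k := by exact_mod_cast (by omega : 0 < k)
    have hnn1 : (0:ℝ) ≤ x / k := div_nonneg hx0 hk0.le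
    have hnn2 : (0:ℝ) ≤ x / k / 2 := by linarith
    rw [nu_eq, ← Int.natCast_floor_eq_floor hnn1, ← Int.natCast_floor_eq_floor hnn2]
    have hdd : x / k / 2 = (x/2) / k := by ring
    rw [hdd]
    push_cast
    ring
  rw [Finset.sum_congr rfl key, Finset.sum_sub_distrib, ← Finset.mul_sum,
    sum_moebius_floor n x (by linarith) hfloor1,
    sum_moebius_floor n (x/2) (by linarith) hfloor2]
  norm_num
end

section
/- For every complex s with Re(s) > 1, ∫_{0}^{1} f(1/x) · x^{s-1} dx = (1 − 2^{1−s}) / s, where f(x) = ∑_{k≥1} μ(k) ν(x/k). -/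
open MeasureTheory

open Finset ArithmeticFunction
open scoped ArithmeticFunction.Moebius

/-- the key Möbius identity: `∑_{k ≤ m} μ(k) ⌊m/k⌋ = 1` for `m ≥ 1`. -/
lemma T_eq (m : ℕ) (hm : 1 ≤ m) :
    ∑ k ∈ Icc 1 m, (μ k : ℤ) * ((m / k : ℕ) : ℤ) = 1 := by
  have key : ∀ k ∈ Icc 1 m, (μ k : ℤ) * ((m / k : ℕ) : ℤ)
      = ∑ j ∈ (Icc 1 m).filter (k ∣ ·), (μ k : ℤ) := by
    intro k hk
    rw [sum_const, nsmul_eq_mul, mul_comm]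
    congr 1
    rw [show Icc 1 m = Ioc 0 m from Finset.Icc_add_one_left_eq_Ioc 0 m, Nat.Ioc_filter_dvd_card_eq_div]
  rw [sum_congr rfl key]
  have swap : ∑ k ∈ Icc 1 m, ∑ j ∈ (Icc 1 m).filter (k ∣ ·), (μ k : ℤ)
      = ∑ j ∈ Icc 1 m, ∑ k ∈ (Icc 1 m).filter (· ∣ j), (μ k : ℤ) := by
    simp_rw [sum_filter]
    exact Finset.sum_comm
  rw [swap]
  have inner : ∀ j ∈ Icc 1 m, ∑ k ∈ (Icc 1 m).filter (· ∣ j), (μ k : ℤ)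
      = if j = 1 then 1 else 0 := by
    intro j hj
    rw [mem_Icc] at hj
    have hfil : (Icc 1 m).filter (· ∣ j) = j.divisors := by
      ext k
      simp only [mem_filter, mem_Icc, Nat.mem_divisors]
      constructor
      · rintro ⟨⟨h1, h2⟩, h3⟩; exact ⟨h3, by omega⟩
      · rintro ⟨h1, h2⟩
        have hj0 : 0 < j := by omega
        have hk0 : 0 < k := Nat.pos_of_dvd_of_pos h1 hj0
        have hkj : k ≤ j := Nat.le_of_dvd hj0 h1
        exact ⟨⟨hk0, le_trans hkj hj.2⟩, h1⟩
    rw [hfil]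
    rw [← ArithmeticFunction.coe_mul_zeta_apply, ArithmeticFunction.moebius_mul_coe_zeta,
      ArithmeticFunction.one_apply]
  rw [sum_congr rfl inner, Finset.sum_ite_eq' (Icc 1 m) 1 (fun _ => (1:ℤ))]
  simp [hm]

lemma nu_eq_s10 (t : ℝ) (ht : 0 ≤ t) : nu t = ((⌊t⌋₊ % 2 : ℕ) : ℝ) := by
  have h1 : nu t = (⌊t/2 + 1/2⌋ : ℝ) - (⌊t/2⌋ : ℝ) := by
    simp only [nu, Int.fract]
    ring
  have h2 : t/2 + 1/2 = (t+1)/((2:ℕ):ℝ) := by push_cast; ring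
  have h3 : t/2 = t/((2:ℕ):ℝ) := by norm_num
  rw [h1, h2, h3]
  rw [← Int.natCast_floor_eq_floor (by positivity),
      ← Int.natCast_floor_eq_floor (by positivity)]
  rw [Nat.floor_div_natCast (t+1) 2, Nat.floor_div_natCast t 2, Nat.floor_add_one ht]
  have : (⌊t⌋₊ + 1) / 2 = ⌊t⌋₊ % 2 + ⌊t⌋₊ / 2 := by omega
  rw [this, Nat.cast_add, Int.cast_add, Int.cast_natCast, Int.cast_natCast]
  ring

/-- `f` in terms of the natural floor: parity sums. -/
lemma f_eq_G (x : ℝ) (hx : 0 ≤ x) :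
    f x = ((∑ k ∈ Icc 1 ⌊x⌋₊, (μ k : ℤ) * ((⌊x⌋₊ / k % 2 : ℕ) : ℤ) : ℤ) : ℝ) := by
  rw [f, Int.cast_sum]
  refine sum_congr rfl fun k hk => ?_
  rw [mem_Icc] at hk
  have hk0 : (0:ℝ) < (k:ℝ) := by exact_mod_cast hk.1
  have ht : 0 ≤ x / k := by positivity
  have hq : ⌊x / (k:ℝ)⌋₊ = ⌊x⌋₊ / k := by
    rw [show x / (k:ℝ) = x / ((k:ℕ):ℝ) from rfl, Nat.floor_div_natCast x k]
  rw [nu_eq_s10 _ ht, hq, Int.cast_mul, Int.cast_natCast]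

lemma G_eq (n : ℕ) (hn : 2 ≤ n) :
    ∑ k ∈ Icc 1 n, (μ k : ℤ) * ((n / k % 2 : ℕ) : ℤ) = -1 := by
  have step : ∀ k ∈ Icc 1 n, (μ k : ℤ) * ((n / k % 2 : ℕ) : ℤ)
      = (μ k : ℤ) * ((n / k : ℕ) : ℤ) - 2 * ((μ k : ℤ) * ((n / 2 / k : ℕ) : ℤ)) := by
    intro k hk
    have hdd : n / 2 / k = n / k / 2 := by
      rw [Nat.div_div_eq_div_mul, Nat.div_div_eq_div_mul, Nat.mul_comm]
    have : ((n / k % 2 : ℕ) : ℤ) = ((n / k : ℕ) : ℤ) - 2 * ((n / 2 / k : ℕ) : ℤ) := by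
      rw [hdd]
      have := Nat.mod_add_div (n / k) 2
      push_cast
      omega
    rw [this]; ring
  rw [sum_congr rfl step, Finset.sum_sub_distrib, ← Finset.mul_sum]
  have h1 : ∑ k ∈ Icc 1 n, (μ k : ℤ) * ((n / k : ℕ) : ℤ) = 1 := T_eq n (by omega)
  have h2 : ∑ k ∈ Icc 1 n, (μ k : ℤ) * ((n / 2 / k : ℕ) : ℤ)
      = ∑ k ∈ Icc 1 (n/2), (μ k : ℤ) * ((n / 2 / k : ℕ) : ℤ) := by
    symm
    refine Finset.sum_subset ?_ ?_
    · exact Finset.Icc_subset_Icc le_rfl (Nat.div_le_self n 2)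
    · intro k hk hk'
      rw [mem_Icc] at hk hk'
      have : n / 2 / k = 0 := Nat.div_eq_of_lt (by omega)
      rw [this]; simp
  rw [h2] at *
  rw [h1, h2, T_eq (n/2) (by omega)]
  ring

lemma f_eval_one (x : ℝ) (hx1 : 1 ≤ x) (hx2 : x < 2) : f x = 1 := by
  have hfl : ⌊x⌋₊ = 1 := by
    rw [Nat.floor_eq_iff (by linarith)]
    constructor <;> [exact_mod_cast hx1; exact_mod_cast hx2]
  rw [f_eq_G x (by linarith), hfl]
  norm_num

lemma f_eval_two (x : ℝ) (hx : 2 ≤ x) : f x = -1 := by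
  have hfl : 2 ≤ ⌊x⌋₊ := Nat.le_floor (by exact_mod_cast hx)
  rw [f_eq_G x (by linarith), G_eq _ hfl]
  norm_num

theorem stmt10 : ∀ s : ℂ, 1 < s.re →
    ∫ x in (0:ℝ)..1, (f (1/x) : ℂ) * (x:ℂ)^(s - 1) = (1 - 2^(1 - s)) / s := by
  intro s hs
  have hs0 : s ≠ 0 := by
    intro h; rw [h] at hs; simp at hs; linarith
  have hre : 0 < (s - 1).re := by simp [Complex.sub_re]; linarith
  have hre1 : (-1:ℝ) < (s - 1).re := by linarith
  -- the two pieces agree pointwise on the half-open intervals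
  have hEq1 : Set.EqOn (fun x : ℝ => (f (1/x) : ℂ) * (x:ℂ)^(s - 1))
      (fun x : ℝ => -((x:ℂ)^(s - 1))) (Set.Ioc (0:ℝ) (1/2)) := by
    intro x hx
    obtain ⟨hx0, hx2⟩ := hx
    have h2 : (2:ℝ) ≤ 1/x := by
      rw [le_div_iff₀ hx0]; linarith
    simp only [f_eval_two _ h2]
    push_cast; ring
  have hEq2 : Set.EqOn (fun x : ℝ => (f (1/x) : ℂ) * (x:ℂ)^(s - 1))
      (fun x : ℝ => (x:ℂ)^(s - 1)) (Set.Ioc (1/2:ℝ) 1) := by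
    intro x hx
    obtain ⟨hx0, hx1⟩ := hx
    have hx0' : (0:ℝ) < x := by linarith
    have h1 : (1:ℝ) ≤ 1/x := by
      rw [le_div_iff₀ hx0']; linarith
    have h2 : 1/x < 2 := by
      rw [div_lt_iff₀ hx0']; linarith
    simp only [f_eval_one _ h1 h2]
    push_cast; ring
  have int1 : IntervalIntegrable (fun x : ℝ => (x:ℂ)^(s-1)) volume 0 (1/2) :=
    intervalIntegral.intervalIntegrable_cpow (Or.inl hre.le)
  have int2 : IntervalIntegrable (fun x : ℝ => (x:ℂ)^(s-1)) volume (1/2) 1 :=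
    intervalIntegral.intervalIntegrable_cpow (Or.inl hre.le)
  have hle1 : (0:ℝ) ≤ 1/2 := by norm_num
  have hle2 : (1/2:ℝ) ≤ 1 := by norm_num
  have intF1 : IntervalIntegrable (fun x : ℝ => (f (1/x) : ℂ) * (x:ℂ)^(s - 1)) volume 0 (1/2) := by
    rw [intervalIntegrable_iff_integrableOn_Ioc_of_le hle1]
    exact ((int1.neg).1.congr_fun hEq1.symm measurableSet_Ioc)
  have intF2 : IntervalIntegrable (fun x : ℝ => (f (1/x) : ℂ) * (x:ℂ)^(s - 1)) volume (1/2) 1 := by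
    rw [intervalIntegrable_iff_integrableOn_Ioc_of_le hle2]
    exact (int2.1.congr_fun hEq2.symm measurableSet_Ioc)
  have hsplit : ∫ x in (0:ℝ)..1, (f (1/x) : ℂ) * (x:ℂ)^(s - 1)
      = (∫ x in (0:ℝ)..(1/2), (f (1/x) : ℂ) * (x:ℂ)^(s - 1))
        + ∫ x in (1/2:ℝ)..1, (f (1/x) : ℂ) * (x:ℂ)^(s - 1) :=
    (intervalIntegral.integral_add_adjacent_intervals intF1 intF2).symm
  have hI1 : ∫ x in (0:ℝ)..(1/2), (f (1/x) : ℂ) * (x:ℂ)^(s - 1)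
      = -∫ x in (0:ℝ)..(1/2), (x:ℂ)^(s - 1) := by
    rw [intervalIntegral.integral_of_le hle1, intervalIntegral.integral_of_le hle1,
      ← integral_neg]
    exact setIntegral_congr_fun measurableSet_Ioc hEq1
  have hI2 : ∫ x in (1/2:ℝ)..1, (f (1/x) : ℂ) * (x:ℂ)^(s - 1)
      = ∫ x in (1/2:ℝ)..1, (x:ℂ)^(s - 1) := by
    rw [intervalIntegral.integral_of_le hle2, intervalIntegral.integral_of_le hle2]
    exact setIntegral_congr_fun measurableSet_Ioc hEq2
  have hcpow1 : ∫ x in (0:ℝ)..(1/2), (x:ℂ)^(s - 1)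
      = (((1/2:ℝ):ℂ)^s - ((0:ℝ):ℂ)^s) / s := by
    rw [integral_cpow (Or.inl (by simpa using hre1)), show s - 1 + 1 = s by ring]
  have hcpow2 : ∫ x in (1/2:ℝ)..1, (x:ℂ)^(s - 1)
      = (((1:ℝ):ℂ)^s - ((1/2:ℝ):ℂ)^s) / s := by
    rw [integral_cpow (Or.inl (by simpa using hre1)), show s - 1 + 1 = s by ring]
  have h0 : ((0:ℝ):ℂ)^s = 0 := by
    rw [Complex.ofReal_zero, Complex.zero_cpow hs0]
  have h1s : ((1:ℝ):ℂ)^s = 1 := by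
    rw [Complex.ofReal_one, Complex.one_cpow]
  have hhalf : (2:ℂ)^(1-s) = 2 * ((1/2:ℝ):ℂ)^s := by
    have h2 : (2:ℂ) ≠ 0 := two_ne_zero
    have : ((1/2:ℝ):ℂ) = (2:ℂ)⁻¹ := by push_cast; ring
    have harg : (2:ℂ).arg ≠ Real.pi := by
      rw [show (2:ℂ) = ((2:ℝ):ℂ) by norm_num,
        Complex.arg_ofReal_of_nonneg (by norm_num)]
      exact Real.pi_ne_zero.symm
    rw [this, Complex.inv_cpow _ _ harg,
      show (1:ℂ) - s = 1 + (-s) by ring, Complex.cpow_add _ _ h2,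
      Complex.cpow_one, Complex.cpow_neg]
  rw [hsplit, hI1, hI2, hcpow1, hcpow2, h0, h1s, hhalf]
  ring
end

section
/- If ∑_{k=1}^{∞} μ(k)/k^s converges for every complex s with Re(s) > 1/2, then the Riemann zeta function has no zeros with Re(s) > 1/2. -/
open Filter

open Finset Complex in
private lemma abel_id17 (R b : ℕ → ℂ) (M : ℕ) : ∀ N, M ≤ N →
    ∑ k ∈ Finset.Ioc M N, (R (k-1) - R k) * b k
      = R M * b (M+1) - R N * b (N+1) + ∑ k ∈ Finset.Ioc M N, R k * (b (k+1) - b k) := by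
  intro N hN
  induction N, hN using Nat.le_induction with
  | base => simp
  | succ N hMN ih =>
    rw [Finset.sum_Ioc_succ_top (by omega), Finset.sum_Ioc_succ_top (by omega), ih]
    simp only [Nat.add_sub_cancel]
    ring

open Finset Complex in
private lemma cpow_diff_bound17 {w : ℂ} (hw : 0 < w.re) {k : ℕ} (hk : 1 ≤ k) :
    ‖((k:ℂ)+1)^(-w) - (k:ℂ)^(-w)‖ ≤ ‖w‖ * (k:ℝ)^(-w.re-1) := by
  have hw0 : w ≠ 0 := fun hcon => by simp [hcon] at hw
  have hk0 : (0:ℝ) < k := by exact_mod_cast hk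
  set g : ℝ → ℂ := fun y => (y:ℂ)^(-w)/(-w) with hg
  have key : ‖g (k+1) - g k‖ ≤ (k:ℝ)^(-w.re-1) * ‖(k+1 : ℝ) - k‖ := by
    apply Convex.norm_image_sub_le_of_norm_hasDerivWithin_le
      (f' := fun x : ℝ => (x:ℂ)^(-w-1)) ?_ ?_ (convex_Icc _ _)
      (Set.left_mem_Icc.2 (by linarith)) (Set.right_mem_Icc.2 (by linarith))
    · intro x hx
      have hx0 : x ≠ 0 := ne_of_gt (lt_of_lt_of_le hk0 hx.1)
      have hr : -w - 1 ≠ -1 := by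
        intro hcon; exact hw0 (by linear_combination -hcon)
      have h1 : HasDerivAt (fun y : ℝ => (y:ℂ) ^ (-w-1+1) / (-w-1+1)) ((x:ℂ)^(-w-1)) x :=
        hasDerivAt_ofReal_cpow_const' hx0 hr
      have h2 : (-w-1+1) = -w := by ring
      rw [h2] at h1
      exact h1.hasDerivWithinAt
    · intro x hx
      have hx0 : (0:ℝ) < x := lt_of_lt_of_le hk0 hx.1
      rw [norm_cpow_eq_rpow_re_of_pos hx0]
      have h3 : (-w-1).re = -w.re-1 := by simp
      rw [h3]
      exact Real.rpow_le_rpow_of_nonpos hk0 hx.1 (by linarith)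
  have hgf : ∀ y : ℝ, (y:ℂ)^(-w) = g y * (-w) := by
    intro y; rw [hg]; field_simp
  calc ‖((k:ℂ)+1)^(-w) - (k:ℂ)^(-w)‖
      = ‖(((k+1:ℝ)):ℂ)^(-w) - ((k:ℝ):ℂ)^(-w)‖ := by push_cast; ring_nf
    _ = ‖(g (k+1) - g k) * (-w)‖ := by rw [hgf, hgf]; ring_nf
    _ = ‖g (k+1) - g k‖ * ‖w‖ := by rw [norm_mul]; simp
    _ ≤ ((k:ℝ)^(-w.re-1) * ‖(k+1 : ℝ) - k‖) * ‖w‖ := by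
        exact mul_le_mul_of_nonneg_right key (norm_nonneg _)
    _ = ‖w‖ * (k:ℝ)^(-w.re-1) := by simp; ring

open Finset Complex in
private lemma norm_cpow_le_one17 {w : ℂ} (hw : 0 < w.re) {k : ℕ} (hk : 1 ≤ k) :
    ‖(k:ℂ)^(-w)‖ ≤ 1 := by
  have hk0 : (0:ℝ) < (k:ℝ) := by exact_mod_cast hk
  rw [show ((k:ℂ)) = (((k:ℝ)):ℂ) by push_cast; rfl,
    norm_cpow_eq_rpow_re_of_pos hk0]
  exact Real.rpow_le_one_of_one_le_of_nonpos (by exact_mod_cast hk) (by simp [hw.le])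

open Finset Complex in
private lemma key_cauchy17 (a : ℕ → ℂ) (L : ℂ)
    (hA : Tendsto (fun n => ∑ k ∈ Finset.Icc 1 n, a k) atTop (nhds L))
    {δ C : ℝ} (hδ : 0 < δ) :
    UniformCauchySeqOn (fun n (w:ℂ) => ∑ k ∈ Finset.Icc 1 n, a k * (k:ℂ)^(-w)) atTop
      {w : ℂ | δ ≤ w.re ∧ ‖w‖ ≤ C} := by
  set R : ℕ → ℂ := fun n => L - ∑ k ∈ Finset.Icc 1 n, a k with hRdef
  have hR : Tendsto R atTop (nhds 0) := by
    simpa [hRdef] using (tendsto_const_nhds (x := L)).sub hA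
  have hsum : Summable (fun k : ℕ => (k:ℝ)^(-δ-1)) :=
    Real.summable_nat_rpow.mpr (by linarith)
  set T₀ : ℝ := ∑' k : ℕ, (k:ℝ)^(-δ-1) with hT0def
  have hT0 : 0 ≤ T₀ := tsum_nonneg (fun k => Real.rpow_nonneg (Nat.cast_nonneg k) _)
  rw [Metric.uniformCauchySeqOn_iff]
  intro ε hε
  set ε' : ℝ := ε / (2 + |C| * T₀ + 1) with hε'def
  have hden : 0 < 2 + |C| * T₀ + 1 := by positivity
  have hε' : 0 < ε' := div_pos hε hden
  obtain ⟨M₀, hM₀⟩ := (Metric.tendsto_atTop.mp hR) ε' hε'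
  simp only [dist_zero_right] at hM₀
  refine ⟨max M₀ 1, ?_⟩
  have main : ∀ m n, max M₀ 1 ≤ m → m ≤ n → ∀ w ∈ {w : ℂ | δ ≤ w.re ∧ ‖w‖ ≤ C},
      dist (∑ k ∈ Finset.Icc 1 m, a k * (k:ℂ)^(-w)) (∑ k ∈ Finset.Icc 1 n, a k * (k:ℂ)^(-w)) < ε := by
    intro m n hm hmn w hw
    obtain ⟨hwre, hwC⟩ := hw
    have hwpos : 0 < w.re := lt_of_lt_of_le hδ hwre
    have hm1 : 1 ≤ m := le_trans (le_max_right _ _) hm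
    have hmM₀ : M₀ ≤ m := le_trans (le_max_left _ _) hm
    set b : ℕ → ℂ := fun k => (k:ℂ)^(-w) with hbdef
    have hIccIoc : ∀ N : ℕ, Finset.Icc 1 N = Finset.Ioc 0 N := fun N =>
      Finset.ext fun x => by simp [Finset.mem_Icc, Finset.mem_Ioc, Nat.lt_iff_add_one_le]
    have hdiff : (∑ k ∈ Finset.Icc 1 n, a k * b k) - (∑ k ∈ Finset.Icc 1 m, a k * b k)
        = ∑ k ∈ Finset.Ioc m n, a k * b k := by
      rw [hIccIoc n, hIccIoc m, ← Finset.sum_Ioc_consecutive _ (Nat.zero_le m) hmn]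
      ring
    have hak : ∀ k ∈ Finset.Ioc m n, a k * b k = (R (k-1) - R k) * b k := by
      intro k hk
      rcases Finset.mem_Ioc.mp hk with ⟨hk1, _⟩
      have hk1' : 1 ≤ k := le_trans hm1 hk1.le
      congr 1
      simp only [hRdef]
      rw [show k = (k-1)+1 by omega, Finset.sum_Icc_succ_top (by omega)]
      simp only [Nat.add_sub_cancel]
      ring
    have habel := abel_id17 R b m n hmn
    have hbnorm : ∀ j, 1 ≤ j → ‖b j‖ ≤ 1 := fun j hj => norm_cpow_le_one17 hwpos hj
    have hRsmall : ∀ j, m ≤ j → ‖R j‖ ≤ ε' := fun j hj => (hM₀ j (le_trans hmM₀ hj)).le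
    have hterm : ∀ k ∈ Finset.Ioc m n, ‖R k * (b (k+1) - b k)‖ ≤ ε' * (|C| * (k:ℝ)^(-δ-1)) := by
      intro k hk
      rcases Finset.mem_Ioc.mp hk with ⟨hk1, _⟩
      have hk1' : 1 ≤ k := le_trans hm1 hk1.le
      rw [norm_mul]
      have h1 : ‖b (k+1) - b k‖ ≤ ‖w‖ * (k:ℝ)^(-w.re-1) := by
        have := cpow_diff_bound17 hwpos hk1'
        rw [hbdef]
        simpa [push_cast] using this
      have h2 : (k:ℝ)^(-w.re-1) ≤ (k:ℝ)^(-δ-1) :=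
        Real.rpow_le_rpow_of_exponent_le (by exact_mod_cast hk1') (by linarith)
      have h3 : ‖w‖ * (k:ℝ)^(-w.re-1) ≤ |C| * (k:ℝ)^(-δ-1) := by
        apply mul_le_mul (le_trans hwC (le_abs_self C)) h2
          (Real.rpow_nonneg (Nat.cast_nonneg k) _) (abs_nonneg C)
      exact mul_le_mul (hRsmall k hk1.le) (le_trans h1 h3) (norm_nonneg _)
        (le_of_lt hε')
    have hsum_le : ∑ k ∈ Finset.Ioc m n, (k:ℝ)^(-δ-1) ≤ T₀ :=
      Summable.sum_le_tsum _ (fun k _ => Real.rpow_nonneg (Nat.cast_nonneg k) _) hsum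
    rw [dist_eq_norm, norm_sub_rev]
    calc ‖(∑ k ∈ Finset.Icc 1 n, a k * (k:ℂ)^(-w)) - (∑ k ∈ Finset.Icc 1 m, a k * (k:ℂ)^(-w))‖
        = ‖∑ k ∈ Finset.Ioc m n, a k * b k‖ := by rw [← hdiff]
      _ = ‖R m * b (m+1) - R n * b (n+1) + ∑ k ∈ Finset.Ioc m n, R k * (b (k+1) - b k)‖ := by
          rw [Finset.sum_congr rfl hak, habel]
      _ ≤ ‖R m * b (m+1) - R n * b (n+1)‖ + ‖∑ k ∈ Finset.Ioc m n, R k * (b (k+1) - b k)‖ :=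
          norm_add_le _ _
      _ ≤ (‖R m‖ * ‖b (m+1)‖ + ‖R n‖ * ‖b (n+1)‖) + ∑ k ∈ Finset.Ioc m n, ‖R k * (b (k+1) - b k)‖ := by
          gcongr
          · exact le_trans (norm_sub_le _ _) (by rw [norm_mul, norm_mul])
          · exact norm_sum_le _ _
      _ ≤ (ε' * 1 + ε' * 1) + ∑ k ∈ Finset.Ioc m n, ε' * (|C| * (k:ℝ)^(-δ-1)) :=
          add_le_add (add_le_add
            (mul_le_mul (hRsmall m le_rfl) (hbnorm _ (by omega)) (norm_nonneg _) hε'.le)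
            (mul_le_mul (hRsmall n hmn) (hbnorm _ (by omega)) (norm_nonneg _) hε'.le))
            (Finset.sum_le_sum hterm)
      _ = ε' * 2 + ε' * |C| * ∑ k ∈ Finset.Ioc m n, (k:ℝ)^(-δ-1) := by
          rw [Finset.mul_sum]
          congr 1
          · ring
          · exact Finset.sum_congr rfl fun k _ => by ring
      _ ≤ ε' * 2 + ε' * |C| * T₀ := by
          gcongr
      _ = ε' * (2 + |C| * T₀) := by ring
      _ < ε := by
          rw [hε'def, div_mul_eq_mul_div, div_lt_iff₀ hden]
          nlinarith
  intro m hm n hn w hw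
  rcases le_total m n with hmn | hnm
  · exact main m n hm hmn w hw
  · rw [dist_comm]; exact main n m hn hnm w hw

theorem stmt17
    (h : ∀ s : ℂ, 1/2 < s.re → ∃ L : ℂ, Tendsto (fun n : ℕ =>
      ∑ k ∈ Finset.Icc 1 n, (ArithmeticFunction.moebius k : ℂ) / (k:ℂ)^s) atTop (nhds L)) :
    ∀ s : ℂ, 1/2 < s.re → riemannZeta s ≠ 0 := by
  classical
  set P : ℕ → ℂ → ℂ := fun n s => ∑ k ∈ Finset.Icc 1 n,
    (ArithmeticFunction.moebius k : ℂ) / (k:ℂ)^s with hPdef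
  set U : Set ℂ := {s : ℂ | 1/2 < s.re} with hUdef
  have hUopen : IsOpen U := isOpen_lt continuous_const Complex.continuous_re
  have hUpre : IsPreconnected U := (convex_halfSpace_re_gt (1/2)).isPreconnected
  set F : ℂ → ℂ := fun s => limUnder atTop (fun n => P n s) with hFdef
  have hFlim : ∀ s ∈ U, Tendsto (fun n => P n s) atTop (nhds (F s)) := by
    intro s hs
    obtain ⟨L, hL⟩ := h s hs
    have : F s = L := hL.limUnder_eq
    rw [this]; exact hL
  have hPdiff : ∀ n, Differentiable ℂ (P n) := by
    intro n
    apply Differentiable.fun_sum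
    intro k hk
    have hk1 : 1 ≤ k := (Finset.mem_Icc.mp hk).1
    have hk0 : (k:ℂ) ≠ 0 := Nat.cast_ne_zero.mpr (by omega)
    exact (differentiable_const _).div (differentiable_id.const_cpow (Or.inl hk0))
      (fun s => by simp [Complex.cpow_eq_zero_iff, hk0])
  -- uniform Cauchy on translated sets
  have hUC : ∀ (σ₀ δ C : ℝ), 1/2 < σ₀ → 0 < δ →
      UniformCauchySeqOn P atTop {s : ℂ | σ₀ + δ ≤ s.re ∧ ‖s - (σ₀:ℂ)‖ ≤ C} := by
    intro σ₀ δ C hσ₀ hδ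
    obtain ⟨L, hL⟩ := h (σ₀:ℂ) (by simpa using hσ₀)
    set a : ℕ → ℂ := fun k => (ArithmeticFunction.moebius k : ℂ)/(k:ℂ)^(σ₀:ℂ) with hadef
    have hkey := key_cauchy17 a L hL hδ (C := C)
    rw [Metric.uniformCauchySeqOn_iff] at hkey ⊢
    intro ε hε
    obtain ⟨N, hN⟩ := hkey ε hε
    refine ⟨N, fun m' hm' n' hn' s hs => ?_⟩
    have hterm : ∀ n, P n s = ∑ k ∈ Finset.Icc 1 n, a k * (k:ℂ)^(-(s - σ₀)) := by
      intro n
      apply Finset.sum_congr rfl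
      intro k hk
      have hk1 : 1 ≤ k := (Finset.mem_Icc.mp hk).1
      have hk0 : (k:ℂ) ≠ 0 := Nat.cast_ne_zero.mpr (by omega)
      have hsplit : (k:ℂ)^s = (k:ℂ)^(σ₀:ℂ) * (k:ℂ)^(s - σ₀) := by
        rw [← Complex.cpow_add _ _ hk0]
        congr 1
        ring
      rw [hsplit, Complex.cpow_neg, hadef]
      simp only [div_mul_eq_div_div, div_eq_mul_inv]
      ring
    rw [hterm m', hterm n']
    refine hN m' hm' n' hn' (s - σ₀) ⟨?_, hs.2⟩
    have := hs.1
    simp only [Complex.sub_re, Complex.ofReal_re]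
    linarith
  -- F is differentiable on U
  have hFdiff : DifferentiableOn ℂ F U := by
    intro s₀ hs₀
    have hs₀' : 1/2 < s₀.re := hs₀
    set σ₀ : ℝ := (1/2 + s₀.re)/2 with hσ₀def
    have hσ₀ : 1/2 < σ₀ := by rw [hσ₀def]; linarith
    set δ : ℝ := (s₀.re - σ₀)/2 with hδdef
    have hδ : 0 < δ := by rw [hδdef, hσ₀def]; linarith
    set C : ℝ := δ + ‖s₀ - (σ₀:ℂ)‖ with hCdef
    have hball : Metric.closedBall s₀ δ ⊆ {s : ℂ | σ₀ + δ ≤ s.re ∧ ‖s - (σ₀:ℂ)‖ ≤ C} := by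
      intro s hs
      rw [Metric.mem_closedBall, dist_eq_norm] at hs
      constructor
      · have h1 : |(s - s₀).re| ≤ ‖s - s₀‖ := Complex.abs_re_le_norm _
        have h2 : (s - s₀).re = s.re - s₀.re := Complex.sub_re _ _
        have : s₀.re = σ₀ + 2*δ := by rw [hδdef]; ring
        rw [h2] at h1
        have := abs_le.mp h1
        linarith [this.1]
      · calc ‖s - (σ₀:ℂ)‖ = ‖(s - s₀) + (s₀ - (σ₀:ℂ))‖ := by ring_nf
          _ ≤ ‖s - s₀‖ + ‖s₀ - (σ₀:ℂ)‖ := norm_add_le _ _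
          _ ≤ δ + ‖s₀ - (σ₀:ℂ)‖ := by linarith
    have hsub : Metric.closedBall s₀ δ ⊆ U := by
      intro s hs
      have := (hball hs).1
      show 1/2 < s.re
      linarith
    have hTU : TendstoUniformlyOn P F atTop (Metric.closedBall s₀ δ) := by
      apply UniformCauchySeqOn.tendstoUniformlyOn_of_tendsto
        (((hUC σ₀ δ C hσ₀ hδ)).mono hball)
      intro s hs
      exact hFlim s (hsub hs)
    have hTLU : TendstoLocallyUniformlyOn P F atTop (Metric.ball s₀ δ) :=
      (hTU.tendstoLocallyUniformlyOn).mono Metric.ball_subset_closedBall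
    have hdiffball : DifferentiableOn ℂ F (Metric.ball s₀ δ) :=
      hTLU.differentiableOn (Eventually.of_forall fun n => (hPdiff n).differentiableOn)
        Metric.isOpen_ball
    exact (hdiffball.differentiableAt
      (Metric.isOpen_ball.mem_nhds (Metric.mem_ball_self hδ))).differentiableWithinAt
  -- F s * ζ s = 1 for re s > 1
  have hmul : ∀ s : ℂ, 1 < s.re → F s * riemannZeta s = 1 := by
    intro s hs
    have hsumm : LSeriesSummable (fun n => (ArithmeticFunction.moebius n : ℂ)) s :=
      ArithmeticFunction.LSeriesSummable_moebius_iff.mpr hs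
    have hHS := hsumm.hasSum
    have h1 : Tendsto (fun n => P n s) atTop
        (nhds (LSeries (fun n => (ArithmeticFunction.moebius n : ℂ)) s)) := by
      have h2 : ∀ n : ℕ, P n s = ∑ k ∈ Finset.range (n+1),
          LSeries.term (fun j => (ArithmeticFunction.moebius j : ℂ)) s k := by
        intro n
        have hr : Finset.range (n+1) = insert 0 (Finset.Icc 1 n) :=
          Finset.ext fun x => by
            simp only [Finset.mem_range, Finset.mem_insert, Finset.mem_Icc]
            omega
        rw [hr, Finset.sum_insert (by simp), LSeries.term_zero, zero_add]
        apply Finset.sum_congr rfl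
        intro k hk
        have hk0 : k ≠ 0 := by
          have := (Finset.mem_Icc.mp hk).1; omega
        rw [LSeries.term_of_ne_zero hk0]
      have h3 : Tendsto (fun n : ℕ => ∑ k ∈ Finset.range (n+1),
          LSeries.term (fun j => (ArithmeticFunction.moebius j : ℂ)) s k) atTop
          (nhds (LSeries (fun n => (ArithmeticFunction.moebius n : ℂ)) s)) :=
        (hHS.tendsto_sum_nat).comp (tendsto_add_atTop_nat 1)
      exact h3.congr (fun n => (h2 n).symm)
    have hFs : F s = LSeries (fun n => (ArithmeticFunction.moebius n : ℂ)) s :=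
      tendsto_nhds_unique (hFlim s (by show 1/2 < s.re; linarith)) h1
    rw [hFs, ← ArithmeticFunction.LSeries_zeta_eq_riemannZeta hs, mul_comm]
    exact ArithmeticFunction.LSeries_zeta_mul_Lseries_moebius hs
  -- removable singularity function G
  set G : ℂ → ℂ := Function.update (fun s => (s - 1) * riemannZeta s) 1 1 with hGdef
  have hGne : ∀ s : ℂ, s ≠ 1 → G s = (s - 1) * riemannZeta s := by
    intro s hs; rw [hGdef]; exact Function.update_of_ne hs _ _
  have hGdiff : ∀ s : ℂ, DifferentiableAt ℂ G s := by
    have hoff : ∀ s : ℂ, s ≠ 1 → DifferentiableAt ℂ G s := by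
      intro s hs
      have hev : G =ᶠ[nhds s] (fun t => (t - 1) * riemannZeta t) := by
        filter_upwards [compl_singleton_mem_nhds hs] with t ht
        exact hGne t ht
      exact DifferentiableAt.congr_of_eventuallyEq
        ((differentiableAt_id.sub_const 1).mul (differentiableAt_riemannZeta hs)) hev
    intro s
    rcases ne_or_eq s 1 with hs | rfl
    · exact hoff s hs
    refine (Complex.analyticAt_of_differentiable_on_punctured_nhds_of_continuousAt ?_ ?_).differentiableAt
    · filter_upwards [self_mem_nhdsWithin] with t ht
      exact hoff t ht
    · simpa only [hGdef, continuousAt_update_same] using riemannZeta_residue_one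
  -- identity theorem
  set H : ℂ → ℂ := fun s => F s * G s - (s - 1) with hHdef
  have hHdiff : DifferentiableOn ℂ H U :=
    (hFdiff.mul (fun s _ => (hGdiff s).differentiableWithinAt)).sub
      ((differentiable_id.sub_const 1).differentiableOn)
  have hHanal : AnalyticOnNhd ℂ H U := hHdiff.analyticOnNhd hUopen
  have hzero : H =ᶠ[nhds (2:ℂ)] 0 := by
    have hVopen : IsOpen {s : ℂ | 1 < s.re} := isOpen_lt continuous_const Complex.continuous_re
    have h2mem : (2:ℂ) ∈ {s : ℂ | 1 < s.re} := by
      show (1:ℝ) < (2:ℂ).re; norm_num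
    filter_upwards [hVopen.mem_nhds h2mem] with s hs
    have hs1 : s ≠ 1 := by
      intro hcon
      rw [hcon] at hs
      simp only [Set.mem_setOf_eq, Complex.one_re] at hs
      exact lt_irrefl 1 hs
    show F s * G s - (s - 1) = 0
    rw [hGne s hs1, show F s * ((s - 1) * riemannZeta s) = (F s * riemannZeta s) * (s-1) by ring,
      hmul s hs]
    ring
  have hHzero : Set.EqOn H 0 U := by
    apply hHanal.eqOn_zero_of_preconnected_of_eventuallyEq_zero hUpre
      (show (2:ℂ) ∈ U by show (1:ℝ)/2 < (2:ℂ).re; norm_num) hzero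
  -- conclude
  intro s hs hζ
  rcases eq_or_ne s 1 with rfl | hs1
  · exact riemannZeta_ne_zero_of_one_le_re (by norm_num) hζ
  · have h0 := hHzero (show s ∈ U from hs)
    have h0' : F s * G s - (s - 1) = 0 := h0
    rw [hGne s hs1, hζ, mul_zero, mul_zero, zero_sub, neg_eq_zero, sub_eq_zero] at h0'
    exact hs1 h0'
end
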